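/- Let Y be a sub-f-algebra of an f-algebra E that is a projection band in E. If a net (y_α) in Y mo-converges to 0 in Y, then it mo-converges to 0 in E. -/
import Mathlib


universe u v w

/-- A (not necessarily unital) `f`-algebra: a vector lattice over `ℝ` with an associative
multiplication such that products of positive elements are positive and `x ⊓ y = 0` implies
`(x*z) ⊓ y = (z*x) ⊓ y = 0` for every positive `z`. -/
class FAlgebra (E : Type u) extends Lattice E, NonUnitalRing E, Module ℝ E where
  add_le_add_left' : ∀ a b : E, a ≤ b → ∀ c : E, c + a ≤ c + b
  smul_nonneg' : ∀ (r : ℝ) (x : E), 0 ≤ r → 0 ≤ x → 0 ≤ r • x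
  mul_nonneg' : ∀ x y : E, 0 ≤ x → 0 ≤ y → 0 ≤ x * y
  f_inf : ∀ x y z : E, x ⊓ y = 0 → 0 ≤ z → (x * z) ⊓ y = 0 ∧ (z * x) ⊓ y = 0

variable {E : Type u}

/-- Order convergence of a net `x` to `l`: there is a net `y` on some directed index set,
decreasing with infimum `0`, eventually dominating `|x a - l|`. -/
def OrderConvTo [Lattice E] [AddCommGroup E] {ι : Type v} [Preorder ι]
    (x : ι → E) (l : E) : Prop :=
  ∃ (κ : Type u) (P : Preorder κ) (y : κ → E),
    Nonempty κ ∧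
    (∀ a b : κ, ∃ c : κ, P.le a c ∧ P.le b c) ∧
    (∀ a b : κ, P.le a b → y b ≤ y a) ∧
    IsGLB (Set.range y) 0 ∧
    (∀ b : κ, ∃ a₀ : ι, ∀ a : ι, a₀ ≤ a → |x a - l| ≤ y b)

/-- Multiplicative order (mo-) convergence in an `f`-algebra:
`|x_α - l| * u` order converges to `0` for every positive `u`. -/
def MOConvTo [FAlgebra E] {ι : Type v} [Preorder ι] (x : ι → E) (l : E) : Prop :=
  ∀ u : E, 0 ≤ u → OrderConvTo (fun a => |x a - l| * u) 0

/-- An `f`-algebra is infinite distributive if multiplication by a positive element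
preserves existing infima of sets of positive elements. -/
def InfDistrib (E : Type u) [FAlgebra E] : Prop :=
  ∀ A : Set E, (∀ a ∈ A, (0 : E) ≤ a) → ∀ m : E, IsGLB A m →
    ∀ u : E, 0 ≤ u → IsGLB ((fun a => u * a) '' A) (u * m)

/-- Archimedean property: `(1/n)x ↓ 0` for every positive `x`. -/
def ArchimedeanVL (E : Type u) [FAlgebra E] : Prop :=
  ∀ x : E, 0 ≤ x → IsGLB (Set.range fun n : ℕ => ((n : ℝ) + 1)⁻¹ • x) 0

/-- A multiplicative unit. -/
def IsMulUnit [FAlgebra E] (e : E) : Prop := ∀ x : E, e * x = x ∧ x * e = x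

/-- Order convergence relative to a sublattice-subspace `S` of `E`: the dominating
decreasing net lies in `S` and its infimum computed within `S` is `0`. -/
def OrderConvToIn [FAlgebra E] (S : Set E) {ι : Type v} [Preorder ι]
    (x : ι → E) (l : E) : Prop :=
  ∃ (κ : Type u) (P : Preorder κ) (y : κ → E),
    Nonempty κ ∧
    (∀ a b : κ, ∃ c : κ, P.le a c ∧ P.le b c) ∧
    (∀ b : κ, y b ∈ S) ∧
    (∀ a b : κ, P.le a b → y b ≤ y a) ∧
    (∀ b : κ, 0 ≤ y b) ∧
    (∀ z ∈ S, (∀ b : κ, z ≤ y b) → z ≤ 0) ∧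
    (∀ b : κ, ∃ a₀ : ι, ∀ a : ι, a₀ ≤ a → |x a - l| ≤ y b)

/-- mo-convergence computed within a sub-`f`-algebra `S` of `E`. -/
def MOConvToIn [FAlgebra E] (S : Set E) {ι : Type v} [Preorder ι]
    (x : ι → E) (l : E) : Prop :=
  ∀ u ∈ S, 0 ≤ u → OrderConvToIn S (fun a => |x a - l| * u) 0

/-- A sub-`f`-algebra (as a set): a vector-sublattice closed under multiplication. -/
def IsSubFAlgebra [FAlgebra E] (Y : Set E) : Prop :=
  (0 : E) ∈ Y ∧ (∀ x ∈ Y, ∀ y ∈ Y, x + y ∈ Y) ∧ (∀ r : ℝ, ∀ x ∈ Y, r • x ∈ Y) ∧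
  (∀ x ∈ Y, -x ∈ Y) ∧ (∀ x ∈ Y, ∀ y ∈ Y, x * y ∈ Y) ∧ (∀ x ∈ Y, ∀ y ∈ Y, x ⊔ y ∈ Y)

/-- An order ideal (solid subspace). -/
def IsOrderIdeal [FAlgebra E] (I : Set E) : Prop :=
  (0 : E) ∈ I ∧ (∀ x ∈ I, ∀ y ∈ I, x + y ∈ I) ∧ (∀ r : ℝ, ∀ x ∈ I, r • x ∈ I) ∧
  (∀ x y : E, |x| ≤ |y| → y ∈ I → x ∈ I)

/-- mo-KB-space: every order bounded increasing net of positive elements is mo-convergent. -/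
def MOKB (E : Type u) [FAlgebra E] : Prop :=
  ∀ (ι : Type u) (P : Preorder ι), Nonempty ι →
    (∀ a b : ι, ∃ c : ι, P.le a c ∧ P.le b c) →
    ∀ x : ι → E, (∀ a b : ι, P.le a b → x a ≤ x b) → (∀ a, 0 ≤ x a) →
      (∃ z : E, ∀ a, x a ≤ z) → ∃ l : E, @MOConvTo E _ ι P x l

/-- mo-continuity: every net order converging to `0` mo-converges to `0`. -/
def MOContinuous (E : Type u) [FAlgebra E] : Prop :=
  ∀ (ι : Type u) (P : Preorder ι), Nonempty ι →
    (∀ a b : ι, ∃ c : ι, P.le a c ∧ P.le b c) →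
    ∀ x : ι → E, @OrderConvTo E _ _ ι P x 0 → @MOConvTo E _ ι P x 0

/-- Order (Dedekind) completeness. -/
def OrderCompleteVL (E : Type u) [FAlgebra E] : Prop :=
  ∀ A : Set E, A.Nonempty → BddAbove A → ∃ m : E, IsLUB A m
section Aux

variable {E : Type u} [FAlgebra E]

instance FAlgebra.toCovariant : CovariantClass E E (· + ·) (· ≤ ·) :=
  ⟨fun c a b h => FAlgebra.add_le_add_left' a b h c⟩

lemma aux_abs_of_nonneg {t : E} (ht : 0 ≤ t) : |t| = t := by
  have : -t ≤ t := le_trans (neg_nonpos.mpr ht) ht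
  rw [abs]
  exact sup_eq_left.mpr this

lemma aux_mul_eq_zero_of_disjoint {x z : E} (hx : 0 ≤ x) (hz : 0 ≤ z)
    (hxz : x ⊓ z = 0) : x * z = 0 := by
  have h1 : (x * z) ⊓ z = 0 := (FAlgebra.f_inf x z z hxz hz).1
  have h2 : (x * z) ⊓ (x * z) = 0 :=
    (FAlgebra.f_inf z (x * z) x (by rwa [inf_comm] at h1) hx).2
  rwa [inf_idem] at h2

lemma aux_nonneg_left_of_disjoint {a b : E} (hab : |a| ⊓ |b| = 0)
    (h : 0 ≤ a + b) : 0 ≤ a := by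
  have h1 : -a ≤ b := by
    rw [neg_le_iff_add_nonneg, add_comm]; exact h
  have h2 : (-a) ⊔ 0 ≤ |a| ⊓ |b| := by
    refine le_inf (sup_le (neg_le_abs a) (abs_nonneg a))
      (sup_le (h1.trans (le_abs_self b)) (abs_nonneg b))
  rw [hab] at h2
  have : -a ≤ 0 := le_trans le_sup_left h2
  exact neg_nonpos.mp this

end Aux

/-- for a sub-`f`-algebra `Y` which is a projection band in `E`,
mo-convergence to `0` in `Y` implies mo-convergence to `0` in `E`. -/
theorem stmt18 {E : Type u} [FAlgebra E] (Y : Set E) (hY : IsSubFAlgebra Y)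
    (hsolid : ∀ a b : E, |a| ≤ |b| → b ∈ Y → a ∈ Y)
    (hproj : ∀ x : E, ∃ y z : E, y ∈ Y ∧ (∀ w ∈ Y, |z| ⊓ |w| = 0) ∧ x = y + z)
    {ι : Type v} [Preorder ι] (hne : Nonempty ι)
    (hdir : ∀ a b : ι, ∃ c : ι, a ≤ c ∧ b ≤ c)
    (y : ι → E) (hyY : ∀ a, y a ∈ Y)
    (h : MOConvToIn Y y (0 : E)) : MOConvTo y (0 : E) := by
  -- membership of absolute values
  have habsY : ∀ x : E, x ∈ Y → |x| ∈ Y := by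
    intro x hx
    refine hsolid |x| x ?_ hx
    rw [aux_abs_of_nonneg (abs_nonneg x)]
  intro u hu
  obtain ⟨uY, ud, huY, hud, hdecomp⟩ := hproj u
  -- product of |y a| with the disjoint part vanishes
  have hprod : ∀ a : ι, |y a| * ud = 0 := by
    intro a
    have hyaY : |y a| ∈ Y := habsY _ (hyY a)
    have hdisj : |ud| ⊓ |y a| = 0 := by
      have := hud (|y a|) hyaY
      rwa [aux_abs_of_nonneg (abs_nonneg (y a))] at this
    have hpos : |y a| * (ud ⊔ 0) = 0 := by
      refine aux_mul_eq_zero_of_disjoint (abs_nonneg _) le_sup_right ?_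
      have h1 : ud ⊔ 0 ≤ |ud| := sup_le (le_abs_self ud) (abs_nonneg ud)
      have h2 : |y a| ⊓ (ud ⊔ 0) ≤ 0 :=
        calc |y a| ⊓ (ud ⊔ 0) ≤ |y a| ⊓ |ud| := inf_le_inf_left _ h1
          _ = 0 := by rw [inf_comm]; exact hdisj
      exact le_antisymm h2 (le_inf (abs_nonneg _) le_sup_right)
    have hneg : |y a| * ((-ud) ⊔ 0) = 0 := by
      refine aux_mul_eq_zero_of_disjoint (abs_nonneg _) le_sup_right ?_
      have h1 : (-ud) ⊔ 0 ≤ |ud| := sup_le (neg_le_abs ud) (abs_nonneg ud)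
      have h2 : |y a| ⊓ ((-ud) ⊔ 0) ≤ 0 :=
        calc |y a| ⊓ ((-ud) ⊔ 0) ≤ |y a| ⊓ |ud| := inf_le_inf_left _ h1
          _ = 0 := by rw [inf_comm]; exact hdisj
      exact le_antisymm h2 (le_inf (abs_nonneg _) le_sup_right)
    have hsplit : (ud ⊔ 0) - ((-ud) ⊔ 0) = ud := by
      rw [sub_eq_iff_eq_add, add_sup, add_zero, sup_comm]
      congr 1
      exact (add_neg_cancel ud).symm
    calc |y a| * ud = |y a| * ((ud ⊔ 0) - ((-ud) ⊔ 0)) := by rw [hsplit]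
      _ = |y a| * (ud ⊔ 0) - |y a| * ((-ud) ⊔ 0) := mul_sub _ _ _
      _ = 0 := by rw [hpos, hneg, sub_zero]
  -- dominate |y a| * u by |y a| * |uY|
  have hdom : ∀ a : ι, |y a| * u ≤ |y a| * |uY| := by
    intro a
    have h1 : |y a| * u = |y a| * uY := by
      rw [hdecomp, mul_add, hprod, add_zero]
    have h2 : 0 ≤ |y a| * (|uY| - uY) :=
      FAlgebra.mul_nonneg' _ _ (abs_nonneg _)
        (sub_nonneg.mpr (le_abs_self uY))
    rw [mul_sub, sub_nonneg] at h2
    rw [h1]; exact h2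
  obtain ⟨κ, P, w, hκne, hκdir, hwY, hdec, hwpos, hinfY, hev⟩ :=
    h (|uY|) (habsY _ huY) (abs_nonneg _)
  refine ⟨κ, P, w, hκne, hκdir, hdec, ?_, ?_⟩
  · constructor
    · rintro _ ⟨b, rfl⟩
      exact hwpos b
    · intro z hz
      -- z is a lower bound of the range of w in E; show z ≤ 0
      have hzb : ∀ b : κ, z ≤ w b := fun b => hz ⟨b, rfl⟩
      have hzp : ∀ b : κ, z ⊔ 0 ≤ w b := by
        intro b
        exact sup_le (hzb b) (hwpos b)
      obtain ⟨p, d, hpY, hdY, hzd⟩ := hproj (z ⊔ 0)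
      have hdp : |d| ⊓ |p| = 0 := hdY p hpY
      have hpd : |p| ⊓ |d| = 0 := by rw [inf_comm]; exact hdp
      have hzsum : 0 ≤ p + d := by rw [← hzd]; exact le_sup_right
      have hp0 : 0 ≤ p := aux_nonneg_left_of_disjoint hpd hzsum
      have hd0 : 0 ≤ d := by
        refine aux_nonneg_left_of_disjoint hdp ?_
        rwa [add_comm] at hzsum
      obtain ⟨b0⟩ := hκne
      have hdle : d ≤ w b0 := by
        have hle : d ≤ z ⊔ 0 := by rw [hzd]; exact le_add_of_nonneg_left hp0
        exact hle.trans (hzp b0)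
      have hd : d = 0 := by
        have h1 : d ≤ |d| ⊓ |w b0| :=
          le_inf (le_abs_self d) (hdle.trans (le_abs_self _))
        rw [hdY (w b0) (hwY b0)] at h1
        exact le_antisymm h1 hd0
      have hzp' : z ⊔ 0 = p := by rw [hzd, hd, add_zero]
      have hz0 : z ⊔ 0 ≤ (0 : E) := hinfY (z ⊔ 0) (hzp' ▸ hpY) hzp
      exact le_trans le_sup_left hz0
  · intro b
    obtain ⟨a₀, ha₀⟩ := hev b
    refine ⟨a₀, fun a ha => ?_⟩
    have h1 := ha₀ a ha
    have h2 : 0 ≤ |y a - 0| * |uY| :=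
      FAlgebra.mul_nonneg' _ _ (abs_nonneg _) (abs_nonneg _)
    rw [sub_zero, aux_abs_of_nonneg h2] at h1
    have h3 : 0 ≤ |y a - 0| * u := by
      rw [sub_zero]
      exact FAlgebra.mul_nonneg' _ _ (abs_nonneg _) hu
    rw [sub_zero, aux_abs_of_nonneg h3]
    rw [sub_zero] at h1 ⊢
    exact le_trans (hdom a) h1
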